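/- Let σ ≥ 0, μ ∈ ℝ, λ > 0, η₁, η₂ > 0, p, q > 0 with p + q = 1, and let X be a real random variable with log E[e^{sX}] = σ²s²/2 + μs + λ(pη₁/(η₁−s) + qη₂/(η₂+s) − 1) for all s ∈ (−η₂, η₁) and E[e^{sX}] = ∞ for s ≥ η₁ and s ≤ −η₂ (double exponential / Kou model). Then log P(X > x) ~ −η₁ x and log P(X ≤ −x) ~ −η₂ x as x → ∞. -/

import Mathlib

open Filter MeasureTheory Real Set

lemma chernoff_aux {Ω : Type*} [MeasurableSpace Ω] (μ : Measure Ω) [IsProbabilityMeasure μ]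
    (Y : Ω → ℝ) (hY : Measurable Y) {s : ℝ} (hs : 0 ≤ s)
    (hint : Integrable (fun ω => Real.exp (s * Y ω)) μ) (x : ℝ) :
    (μ {ω | x < Y ω}).toReal * Real.exp (s * x) ≤ ∫ ω, Real.exp (s * Y ω) ∂μ := by
  have hset : MeasurableSet {ω | x < Y ω} := measurableSet_lt measurable_const hY
  have hpt : (fun ω => Set.indicator {ω | x < Y ω} (fun _ => Real.exp (s * x)) ω)
      ≤ fun ω => Real.exp (s * Y ω) := by
    intro ω
    dsimp only
    by_cases h : ω ∈ {ω | x < Y ω}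
    · rw [Set.indicator_of_mem h]
      exact Real.exp_le_exp.2 (mul_le_mul_of_nonneg_left (le_of_lt h) hs)
    · rw [Set.indicator_of_notMem h]
      exact (Real.exp_pos _).le
  have := integral_mono ((integrable_const (Real.exp (s * x))).indicator hset) hint hpt
  rwa [integral_indicator_const _ hset, smul_eq_mul] at this

set_option maxHeartbeats 1000000 in
lemma step2_aux {Ω : Type*} [MeasurableSpace Ω] (μ : Measure Ω) [IsProbabilityMeasure μ]
    (Y : Ω → ℝ) (hY : Measurable Y) (r C K : ℝ)
    (hr : 0 < r) (hC : 0 < C) (hK : 0 ≤ K)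
    (hint : ∀ s ∈ Set.Ico (0:ℝ) r, Integrable (fun ω => Real.exp (s * Y ω)) μ)
    (hMle : ∀ s ∈ Set.Ico (0:ℝ) r,
      (∫ ω, Real.exp (s * Y ω) ∂μ) ≤ Real.exp (C / (r - s) + K))
    (hMge : ∀ s ∈ Set.Ico (0:ℝ) r,
      Real.exp (C / (r - s) - K) ≤ ∫ ω, Real.exp (s * Y ω) ∂μ) :
    ∀ ε : ℝ, 0 < ε → ∃ x₁ : ℝ, ∀ x ≥ x₁,
      Real.exp (-((r + ε) * x)) ≤ (μ {ω | x < Y ω}).toReal := by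
  intro ε hε
  set α : ℝ := ε / (2 * r) with hαdef
  have hα : 0 < α := by positivity
  set u : ℝ := Real.sqrt (1 + α / 2) with hudef
  set v : ℝ := Real.sqrt (1 + α) with hvdef
  have hu2 : u ^ 2 = 1 + α / 2 := Real.sq_sqrt (by linarith only [hα])
  have hv2 : v ^ 2 = 1 + α := Real.sq_sqrt (by linarith only [hα])
  have hu1 : 1 < u := by
    rw [hudef]
    exact (Real.lt_sqrt zero_le_one).2 (by rw [one_pow]; linarith only [hα])
  have huv : u < v := by
    rw [hudef, hvdef]
    exact Real.sqrt_lt_sqrt (by linarith only [hα]) (by linarith only [hα])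
  have hupos : (0:ℝ) < u := by linarith only [hu1]
  have hvpos : (0:ℝ) < v := by linarith only [hu1, huv]
  set γ₁ : ℝ := 2 - 1 / u with hγ₁def
  set γ₃ : ℝ := 2 * v - v ^ 2 / u with hγ₃def
  set γ : ℝ := max γ₁ γ₃ with hγdef
  have hγ₁pos : 0 < γ₁ := by
    have h1 : 1 / u < 1 := by rw [div_lt_one hupos]; exact hu1
    rw [hγ₁def]; linarith only [h1]
  have hγpos : 0 < γ := lt_of_lt_of_le hγ₁pos (le_max_left _ _)
  have hγu : γ < u := by
    have h1 : γ₁ < u := by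
      have he : u - (2 - 1 / u) = (u - 1) ^ 2 / u := by field_simp; ring
      have hp : 0 < (u - 1) ^ 2 / u := div_pos (pow_pos (by linarith only [hu1]) 2) hupos
      rw [hγ₁def]; linarith only [he ▸ hp]
    have h2 : γ₃ < u := by
      have he : u - (2 * v - v ^ 2 / u) = (v - u) ^ 2 / u := by field_simp; ring
      have hp : 0 < (v - u) ^ 2 / u := div_pos (pow_pos (by linarith only [huv]) 2) hupos
      rw [hγ₃def]; linarith only [he ▸ hp]
    exact max_lt h1 h2
  set B : ℝ := (2 * K + 2) / (u - γ) with hBdef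
  have hB0 : 0 ≤ B := div_nonneg (by linarith only [hK]) (by linarith only [hγu])
  refine ⟨max (max 1 (C / r ^ 2)) ((B ^ 2 + 1) / C), fun x hx => ?_⟩
  have hx1 : (1:ℝ) ≤ x := le_trans (le_trans (le_max_left _ _) (le_max_left _ _)) hx
  have hxC : C / r ^ 2 ≤ x := le_trans (le_trans (le_max_right _ _) (le_max_left _ _)) hx
  have hxB : (B ^ 2 + 1) / C ≤ x := le_trans (le_max_right _ _) hx
  have hxpos : (0:ℝ) < x := by linarith only [hx1]
  by_contra hcon
  push_neg at hcon
  set G : ℝ := Real.sqrt (C * x) with hGdef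
  have hG2 : G ^ 2 = C * x := Real.sq_sqrt (by positivity)
  have hGpos : 0 < G := Real.sqrt_pos.2 (by positivity)
  have hxne : x ≠ 0 := ne_of_gt hxpos
  have hune : u ≠ 0 := ne_of_gt hupos
  have hvne : v ≠ 0 := ne_of_gt hvpos
  have hGne : G ≠ 0 := ne_of_gt hGpos
  have hrne : r ≠ 0 := ne_of_gt hr
  -- the three tilting parameters
  set δ₂ : ℝ := G / x with hδ₂def
  set δ : ℝ := G / (u * x) with hδdef
  set δ' : ℝ := G / (v * x) with hδ'def
  have hδ₂pos : 0 < δ₂ := by rw [hδ₂def]; positivity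
  have hδpos : 0 < δ := by rw [hδdef]; positivity
  have hδ'pos : 0 < δ' := by rw [hδ'def]; positivity
  have hδ'δ : δ' < δ := by
    rw [hδdef, hδ'def]
    exact div_lt_div_of_pos_left hGpos (by positivity)
      (mul_lt_mul_of_pos_right huv hxpos)
  have hδδ₂ : δ < δ₂ := by
    rw [hδdef, hδ₂def]
    exact div_lt_div_of_pos_left hGpos hxpos
      (by simpa using mul_lt_mul_of_pos_right hu1 hxpos)
  have hδ₂r : δ₂ ≤ r := by
    have hCx : C ≤ x * r ^ 2 := by
      rw [div_le_iff₀ (by positivity : (0:ℝ) < r ^ 2)] at hxC; exact hxC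
    have h1 : C * x ≤ (r * x) ^ 2 := by
      calc C * x ≤ (x * r ^ 2) * x := mul_le_mul_of_nonneg_right hCx hxpos.le
        _ = (r * x) ^ 2 := by ring
    have h2 : G ≤ r * x := by
      calc G = Real.sqrt (C * x) := hGdef
        _ ≤ Real.sqrt ((r * x) ^ 2) := Real.sqrt_le_sqrt h1
        _ = r * x := Real.sqrt_sq (by positivity)
    rw [hδ₂def, div_le_iff₀ hxpos]; linarith only [h2]
  set s : ℝ := r - δ with hsdef
  set s₂ : ℝ := r - δ₂ with hs₂def
  set s' : ℝ := r - δ' with hs'def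
  have hs_mem : s ∈ Set.Ico (0:ℝ) r :=
    ⟨by rw [hsdef]; linarith only [hδδ₂, hδ₂r], by rw [hsdef]; linarith only [hδpos]⟩
  have hs₂_mem : s₂ ∈ Set.Ico (0:ℝ) r :=
    ⟨by rw [hs₂def]; linarith only [hδ₂r], by rw [hs₂def]; linarith only [hδ₂pos]⟩
  have hs'_mem : s' ∈ Set.Ico (0:ℝ) r :=
    ⟨by rw [hs'def]; linarith only [hδ'δ, hδδ₂, hδ₂r], by rw [hs'def]; linarith only [hδ'pos]⟩
  set y : ℝ := v ^ 2 * x with hydef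
  clear_value α u v γ₁ γ₃ γ B G δ₂ δ δ' s s₂ s' y
  have hset : MeasurableSet {ω | x < Y ω} := measurableSet_lt measurable_const hY
  -- pointwise domination
  set g : Ω → ℝ := fun ω => Real.exp ((δ₂ - δ) * x) * Real.exp (s₂ * Y ω) +
      Set.indicator {ω | x < Y ω} (fun _ => Real.exp (s * y)) ω +
      Real.exp (-((δ - δ') * y)) * Real.exp (s' * Y ω) with hgdef
  have hpt : (fun ω => Real.exp (s * Y ω)) ≤ g := by
    intro ω
    have e1 : 0 ≤ Set.indicator {ω | x < Y ω} (fun _ => Real.exp (s * y)) ω :=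
      Set.indicator_nonneg (fun _ _ => (Real.exp_pos _).le) ω
    have e2 : 0 < Real.exp ((δ₂ - δ) * x) * Real.exp (s₂ * Y ω) := by positivity
    have e3 : 0 < Real.exp (-((δ - δ') * y)) * Real.exp (s' * Y ω) := by positivity
    rw [hgdef]
    dsimp only
    rcases le_or_gt (Y ω) x with h | h
    · have key : Real.exp (s * Y ω) ≤ Real.exp ((δ₂ - δ) * x) * Real.exp (s₂ * Y ω) := by
        rw [← Real.exp_add, Real.exp_le_exp, hsdef, hs₂def]
        linarith only [mul_le_mul_of_nonneg_left h (by linarith only [hδδ₂] : (0:ℝ) ≤ δ₂ - δ)]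
      linarith only [key, e1, e3]
    · rcases le_or_gt (Y ω) y with h2 | h2
      · have hmem : ω ∈ {ω | x < Y ω} := h
        rw [Set.indicator_of_mem hmem]
        have key : Real.exp (s * Y ω) ≤ Real.exp (s * y) :=
          Real.exp_le_exp.2 (mul_le_mul_of_nonneg_left h2 hs_mem.1)
        linarith only [key, e2, e3]
      · have key : Real.exp (s * Y ω) ≤ Real.exp (-((δ - δ') * y)) * Real.exp (s' * Y ω) := by
          rw [← Real.exp_add, Real.exp_le_exp, hsdef, hs'def]
          linarith only [mul_le_mul_of_nonneg_left h2.le (by linarith only [hδ'δ] : (0:ℝ) ≤ δ - δ')]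
        linarith only [key, e1, e2]
  have hint2 : Integrable (fun ω => Real.exp ((δ₂ - δ) * x) * Real.exp (s₂ * Y ω)) μ :=
    (hint s₂ hs₂_mem).const_mul _
  have hintI : Integrable (Set.indicator {ω | x < Y ω} (fun _ => Real.exp (s * y))) μ :=
    (integrable_const _).indicator hset
  have hint3 : Integrable (fun ω => Real.exp (-((δ - δ') * y)) * Real.exp (s' * Y ω)) μ :=
    (hint s' hs'_mem).const_mul _
  have hgint : Integrable g μ := by
    rw [hgdef]; exact (hint2.add hintI).add hint3
  have key : (∫ ω, Real.exp (s * Y ω) ∂μ) ≤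
      Real.exp ((δ₂ - δ) * x) * (∫ ω, Real.exp (s₂ * Y ω) ∂μ) +
      (μ {ω | x < Y ω}).toReal * Real.exp (s * y) +
      Real.exp (-((δ - δ') * y)) * (∫ ω, Real.exp (s' * Y ω) ∂μ) := by
    have h0 := integral_mono (hint s hs_mem) hgint hpt
    have hint12 : Integrable (fun ω => Real.exp ((δ₂ - δ) * x) * Real.exp (s₂ * Y ω) +
        Set.indicator {ω | x < Y ω} (fun _ => Real.exp (s * y)) ω) μ := hint2.add hintI
    have e123 : (∫ ω, (Real.exp ((δ₂ - δ) * x) * Real.exp (s₂ * Y ω) +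
          Set.indicator {ω | x < Y ω} (fun _ => Real.exp (s * y)) ω +
          Real.exp (-((δ - δ') * y)) * Real.exp (s' * Y ω)) ∂μ) =
        (∫ ω, (Real.exp ((δ₂ - δ) * x) * Real.exp (s₂ * Y ω) +
          Set.indicator {ω | x < Y ω} (fun _ => Real.exp (s * y)) ω) ∂μ) +
        ∫ ω, Real.exp (-((δ - δ') * y)) * Real.exp (s' * Y ω) ∂μ :=
      integral_add hint12 hint3
    have e12 : (∫ ω, (Real.exp ((δ₂ - δ) * x) * Real.exp (s₂ * Y ω) +
          Set.indicator {ω | x < Y ω} (fun _ => Real.exp (s * y)) ω) ∂μ) =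
        (∫ ω, Real.exp ((δ₂ - δ) * x) * Real.exp (s₂ * Y ω) ∂μ) +
        ∫ ω, Set.indicator {ω | x < Y ω} (fun _ => Real.exp (s * y)) ω ∂μ :=
      integral_add hint2 hintI
    have eA : (∫ ω, Real.exp ((δ₂ - δ) * x) * Real.exp (s₂ * Y ω) ∂μ) =
        Real.exp ((δ₂ - δ) * x) * ∫ ω, Real.exp (s₂ * Y ω) ∂μ :=
      integral_const_mul _ _
    have eC : (∫ ω, Real.exp (-((δ - δ') * y)) * Real.exp (s' * Y ω) ∂μ) =
        Real.exp (-((δ - δ') * y)) * ∫ ω, Real.exp (s' * Y ω) ∂μ :=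
      integral_const_mul _ _
    have eB : (∫ ω, Set.indicator {ω | x < Y ω} (fun _ => Real.exp (s * y)) ω ∂μ) =
        (μ {ω | x < Y ω}).toReal * Real.exp (s * y) := by
      rw [integral_indicator_const _ hset, smul_eq_mul]; rfl
    have h1 : (∫ ω, g ω ∂μ) = (∫ ω, (Real.exp ((δ₂ - δ) * x) * Real.exp (s₂ * Y ω) +
          Set.indicator {ω | x < Y ω} (fun _ => Real.exp (s * y)) ω +
          Real.exp (-((δ - δ') * y)) * Real.exp (s' * Y ω)) ∂μ) := by rw [hgdef]
    rw [h1, e123, e12, eA, eB, eC] at h0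
    exact h0
  -- identify the exponents
  have hrs : r - s = δ := by rw [hsdef]; ring
  have hrs₂ : r - s₂ = δ₂ := by rw [hs₂def]; ring
  have hrs' : r - s' = δ' := by rw [hs'def]; ring
  have hCδ : C / δ = u * G := by
    rw [hδdef, div_div_eq_mul_div, div_eq_iff hGne]
    linear_combination (-u) * hG2
  have hCδ₂ : C / δ₂ = G := by
    rw [hδ₂def, div_div_eq_mul_div, div_eq_iff hGne]
    linear_combination (-1 : ℝ) * hG2
  have hCδ' : C / δ' = v * G := by
    rw [hδ'def, div_div_eq_mul_div, div_eq_iff hGne]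
    linear_combination (-v) * hG2
  -- the four exponential bounds
  have hbd_s : Real.exp (u * G - K) ≤ ∫ ω, Real.exp (s * Y ω) ∂μ := by
    have h1 := hMge s hs_mem
    rwa [hrs, hCδ] at h1
  have hbd1 : Real.exp ((δ₂ - δ) * x) * (∫ ω, Real.exp (s₂ * Y ω) ∂μ) ≤
      Real.exp (γ₁ * G + K) := by
    have h1 := hMle s₂ hs₂_mem
    rw [hrs₂, hCδ₂] at h1
    calc Real.exp ((δ₂ - δ) * x) * (∫ ω, Real.exp (s₂ * Y ω) ∂μ) ≤
          Real.exp ((δ₂ - δ) * x) * Real.exp (G + K) :=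
            mul_le_mul_of_nonneg_left h1 (Real.exp_pos _).le
      _ = Real.exp ((δ₂ - δ) * x + (G + K)) := (Real.exp_add _ _).symm
      _ = Real.exp (γ₁ * G + K) := by
          congr 1
          rw [hγ₁def, hδ₂def, hδdef]
          field_simp
          ring
  have hbd3 : Real.exp (-((δ - δ') * y)) * (∫ ω, Real.exp (s' * Y ω) ∂μ) ≤
      Real.exp (γ₃ * G + K) := by
    have h1 := hMle s' hs'_mem
    rw [hrs', hCδ'] at h1
    calc Real.exp (-((δ - δ') * y)) * (∫ ω, Real.exp (s' * Y ω) ∂μ) ≤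
          Real.exp (-((δ - δ') * y)) * Real.exp (v * G + K) :=
            mul_le_mul_of_nonneg_left h1 (Real.exp_pos _).le
      _ = Real.exp (-((δ - δ') * y) + (v * G + K)) := (Real.exp_add _ _).symm
      _ = Real.exp (γ₃ * G + K) := by
          congr 1
          rw [hγ₃def, hδdef, hδ'def, hydef]
          field_simp
          ring
  have hbd2 : (μ {ω | x < Y ω}).toReal * Real.exp (s * y) ≤ 1 := by
    have h1 : (μ {ω | x < Y ω}).toReal * Real.exp (s * y) ≤
        Real.exp (-((r + ε) * x)) * Real.exp (s * y) :=
      mul_le_mul_of_nonneg_right hcon.le (Real.exp_pos _).le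
    have h2 : Real.exp (-((r + ε) * x)) * Real.exp (s * y) =
        Real.exp (-((r + ε) * x) + s * y) := (Real.exp_add _ _).symm
    have h6 : 0 < ε * x := mul_pos hε hxpos
    have hsy : s * y ≤ (r + ε / 2) * x := by
      calc s * y = (r - δ) * ((1 + α) * x) := by rw [hsdef, hydef, hv2]
        _ ≤ r * ((1 + α) * x) :=
            mul_le_mul_of_nonneg_right (by linarith only [hδpos]) (by positivity)
        _ = (r + ε / 2) * x := by rw [hαdef]; field_simp
    have h7 : Real.exp (-((r + ε) * x) + s * y) ≤ 1 :=
      Real.exp_le_one_iff.2 (by linarith only [hsy, h6])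
    linarith only [h1, h2, h7]
  -- consolidate
  have hγ₁γ : γ₁ ≤ γ := by rw [hγdef]; exact le_max_left _ _
  have hγ₃γ : γ₃ ≤ γ := by rw [hγdef]; exact le_max_right _ _
  have eγ1 : Real.exp (γ₁ * G + K) ≤ Real.exp (γ * G + K) :=
    Real.exp_le_exp.2 (by linarith only [mul_le_mul_of_nonneg_right hγ₁γ hGpos.le])
  have eγ3 : Real.exp (γ₃ * G + K) ≤ Real.exp (γ * G + K) :=
    Real.exp_le_exp.2 (by linarith only [mul_le_mul_of_nonneg_right hγ₃γ hGpos.le])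
  have hone : (1:ℝ) ≤ Real.exp (γ * G + K) := by
    rw [show (1:ℝ) = Real.exp 0 by simp]
    exact Real.exp_le_exp.2 (by
      have := mul_pos hγpos hGpos
      linarith only [this, hK])
  have hchain : Real.exp (u * G - K) ≤ 3 * Real.exp (γ * G + K) := by
    linarith only [hbd_s, key, hbd1, hbd2, hbd3, eγ1, eγ3, hone]
  have h3e : (3:ℝ) ≤ Real.exp 2 := by linarith only [Real.add_one_le_exp 2]
  have hchain2 : Real.exp (u * G - K) ≤ Real.exp (γ * G + K + 2) := by
    calc Real.exp (u * G - K) ≤ 3 * Real.exp (γ * G + K) := hchain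
      _ ≤ Real.exp 2 * Real.exp (γ * G + K) :=
          mul_le_mul_of_nonneg_right h3e (Real.exp_pos _).le
      _ = Real.exp (γ * G + K + 2) := by rw [← Real.exp_add]; ring_nf
  have hfin : u * G - K ≤ γ * G + K + 2 := Real.exp_le_exp.1 hchain2
  have hGB : G ≤ B := by
    rw [hBdef, le_div_iff₀ (by linarith only [hγu] : (0:ℝ) < u - γ)]
    linarith only [hfin]
  have hGB' : B < G := by
    have h4 : B ^ 2 + 1 ≤ x * C := by
      rw [div_le_iff₀ hC] at hxB; exact hxB
    exact lt_of_pow_lt_pow_left₀ 2 hGpos.le (by linarith only [h4, hG2])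
  linarith only [hGB, hGB']
set_option maxHeartbeats 1000000 in
lemma tail_asymp {Ω : Type*} [MeasurableSpace Ω] (μ : Measure Ω) [IsProbabilityMeasure μ]
    (Y : Ω → ℝ) (hY : Measurable Y) (r C K : ℝ)
    (hr : 0 < r) (hC : 0 < C) (hK : 0 ≤ K)
    (hint : ∀ s ∈ Set.Ico (0:ℝ) r, Integrable (fun ω => Real.exp (s * Y ω)) μ)
    (hbd : ∀ s ∈ Set.Ico (0:ℝ) r,
      |Real.log (∫ ω, Real.exp (s * Y ω) ∂μ) - C / (r - s)| ≤ K) :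
    (∀ᶠ x in atTop, 0 < (μ {ω | x < Y ω}).toReal) ∧
    Tendsto (fun x => Real.log ((μ {ω | x < Y ω}).toReal) / x) atTop (nhds (-r)) := by
  set M : ℝ → ℝ := fun s => ∫ ω, Real.exp (s * Y ω) ∂μ with hM
  set T : ℝ → ℝ := fun x => (μ {ω | x < Y ω}).toReal with hT
  -- positivity of M
  have hMpos : ∀ s ∈ Set.Ico (0:ℝ) r, 0 < M s := by
    intro s hs
    rw [hM]
    rw [integral_pos_iff_support_of_nonneg (fun ω => (Real.exp_pos _).le) (hint s hs)]
    have : Function.support (fun ω => Real.exp (s * Y ω)) = Set.univ := by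
      ext ω; simp [Function.support, (Real.exp_pos (s * Y ω)).ne']
    rw [this]
    simp
  -- Step 1 : Chernoff upper bound
  have hup : ∀ s ∈ Set.Ico (0:ℝ) r, ∀ x : ℝ, T x ≤ Real.exp (C / (r - s) + K - s * x) := by
    intro s hs x
    have h1 : T x * Real.exp (s * x) ≤ M s := chernoff_aux μ Y hY hs.1 (hint s hs) x
    have h2 : M s ≤ Real.exp (C / (r - s) + K) := by
      have := (abs_le.1 (hbd s hs)).2
      calc M s = Real.exp (Real.log (M s)) := (Real.exp_log (hMpos s hs)).symm
        _ ≤ Real.exp (C / (r - s) + K) := Real.exp_le_exp.2 (by linarith)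
    have hx : (0:ℝ) < Real.exp (s * x) := Real.exp_pos _
    have : T x ≤ Real.exp (C / (r - s) + K) / Real.exp (s * x) := by
      rw [le_div_iff₀ hx]; exact h1.trans h2
    calc T x ≤ Real.exp (C / (r - s) + K) / Real.exp (s * x) := this
      _ = Real.exp (C / (r - s) + K - s * x) := by rw [← Real.exp_sub]
  -- Step 2 : lower bound
  have hMle : ∀ s ∈ Set.Ico (0:ℝ) r, M s ≤ Real.exp (C / (r - s) + K) := by
    intro s hs
    have := (abs_le.1 (hbd s hs)).2
    calc M s = Real.exp (Real.log (M s)) := (Real.exp_log (hMpos s hs)).symm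
      _ ≤ Real.exp (C / (r - s) + K) := Real.exp_le_exp.2 (by linarith)
  have hMge : ∀ s ∈ Set.Ico (0:ℝ) r, Real.exp (C / (r - s) - K) ≤ M s := by
    intro s hs
    have := (abs_le.1 (hbd s hs)).1
    calc Real.exp (C / (r - s) - K) ≤ Real.exp (Real.log (M s)) :=
          Real.exp_le_exp.2 (by linarith)
      _ = M s := Real.exp_log (hMpos s hs)
  have hlow : ∀ ε : ℝ, 0 < ε → ∃ x₁ : ℝ, ∀ x ≥ x₁, Real.exp (-((r + ε) * x)) ≤ T x :=
    step2_aux μ Y hY r C K hr hC hK hint hMle hMge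
  constructor
  · obtain ⟨x₁, hx₁⟩ := hlow 1 one_pos
    filter_upwards [eventually_ge_atTop x₁] with x hx
    exact lt_of_lt_of_le (Real.exp_pos _) (hx₁ x hx)
  · rw [Metric.tendsto_atTop]
    intro ε hε
    set ε' : ℝ := min (ε / 3) (r / 2) with hε'
    have hε'pos : 0 < ε' := lt_min (by linarith) (by linarith)
    have hε'r : ε' < r := lt_of_le_of_lt (min_le_right _ _) (by linarith)
    obtain ⟨x₁, hx₁⟩ := hlow ε' hε'pos
    have hsmem : r - ε' ∈ Set.Ico (0:ℝ) r := ⟨by linarith, by linarith⟩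
    set x₂ : ℝ := max (max x₁ 1) ((C / ε' + K) / ε') with hx₂
    refine ⟨x₂ + 1, fun x hx => ?_⟩
    have hxx₁ : x ≥ x₁ := le_trans (le_trans (le_max_left _ _) (le_max_left _ _)) (by linarith)
    have hxpos : (0:ℝ) < x := by
      have : (1:ℝ) ≤ x := le_trans (le_trans (le_max_right _ _) (le_max_left _ _)) (by linarith)
      linarith
    have hxb : (C / ε' + K) / ε' ≤ x := le_trans (le_max_right _ _) (by linarith)
    have hTpos : 0 < T x := lt_of_lt_of_le (Real.exp_pos _) (hx₁ x hxx₁)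
    have hlog1 : -((r + ε') * x) ≤ Real.log (T x) := by
      have := Real.log_le_log (Real.exp_pos _) (hx₁ x hxx₁)
      rwa [Real.log_exp] at this
    have hlog2 : Real.log (T x) ≤ C / ε' + K - (r - ε') * x := by
      have := Real.log_le_log hTpos (hup (r - ε') hsmem x)
      rwa [Real.log_exp, show r - (r - ε') = ε' by ring] at this
    have hεle : ε' ≤ ε / 3 := min_le_left _ _
    have hfx1 : -(r + ε') ≤ Real.log (T x) / x := by
      calc -(r + ε') = -((r + ε') * x) / x := by field_simp
        _ ≤ Real.log (T x) / x := (div_le_div_iff_of_pos_right hxpos).mpr hlog1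
    have hfx2 : Real.log (T x) / x ≤ -r + 2 * ε' := by
      have hd : (C / ε' + K) / x ≤ ε' := by
        rw [div_le_iff₀ hxpos]
        rw [div_le_iff₀ hε'pos] at hxb
        linarith [mul_le_mul_of_nonneg_left hxb (le_of_lt hε'pos)]
      calc Real.log (T x) / x ≤ (C / ε' + K - (r - ε') * x) / x :=
            (div_le_div_iff_of_pos_right hxpos).mpr hlog2
        _ = (C / ε' + K) / x - (r - ε') := by field_simp
        _ ≤ ε' - (r - ε') := by linarith
        _ = -r + 2 * ε' := by ring
    rw [Real.dist_eq, abs_lt]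
    constructor <;> linarith

lemma tail_asymp_le {Ω : Type*} [MeasurableSpace Ω] (μ : Measure Ω) [IsProbabilityMeasure μ]
    (Y : Ω → ℝ) (hY : Measurable Y) (r C K : ℝ)
    (hr : 0 < r) (hC : 0 < C) (hK : 0 ≤ K)
    (hint : ∀ s ∈ Set.Ico (0:ℝ) r, Integrable (fun ω => Real.exp (s * Y ω)) μ)
    (hbd : ∀ s ∈ Set.Ico (0:ℝ) r,
      |Real.log (∫ ω, Real.exp (s * Y ω) ∂μ) - C / (r - s)| ≤ K) :
    Tendsto (fun x => Real.log ((μ {ω | x ≤ Y ω}).toReal) / x) atTop (nhds (-r)) := by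
  obtain ⟨hpos, htd⟩ := tail_asymp μ Y hY r C K hr hC hK hint hbd
  have hupperlim : Tendsto (fun x : ℝ =>
      Real.log ((μ {ω | x - 1 < Y ω}).toReal) / (x - 1) * ((x - 1) / x)) atTop
      (nhds (-r * 1)) := by
    apply Tendsto.mul
    · have hcomp : Tendsto (fun x : ℝ => x - 1) atTop atTop := by
        simpa [sub_eq_add_neg] using tendsto_atTop_add_const_right atTop (-1) (tendsto_id (α := ℝ))
      exact htd.comp hcomp
    · have h1 : Tendsto (fun x : ℝ => 1 - x⁻¹) atTop (nhds 1) := by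
        simpa using (tendsto_const_nhds (x := (1:ℝ)) (f := atTop (α := ℝ))).sub
          tendsto_inv_atTop_zero
      apply h1.congr'
      filter_upwards [eventually_gt_atTop 0] with x hx
      field_simp
  rw [mul_one] at hupperlim
  apply tendsto_of_tendsto_of_tendsto_of_le_of_le' htd hupperlim
  · filter_upwards [hpos, eventually_gt_atTop 0] with x hTx hx
    have hsub : {ω | x < Y ω} ⊆ {ω | x ≤ Y ω} := fun ω (h : x < Y ω) => le_of_lt h
    have hm : (μ {ω | x < Y ω}).toReal ≤ (μ {ω | x ≤ Y ω}).toReal :=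
      ENNReal.toReal_mono (measure_ne_top μ _) (measure_mono hsub)
    exact (div_le_div_iff_of_pos_right hx).2 (Real.log_le_log hTx hm)
  · filter_upwards [hpos, eventually_gt_atTop 1] with x hTx hx1
    have hx0 : (0:ℝ) < x := by linarith
    have hx10 : (0:ℝ) < x - 1 := by linarith
    have hsub : {ω | x < Y ω} ⊆ {ω | x ≤ Y ω} := fun ω (h : x < Y ω) => le_of_lt h
    have hposle : 0 < (μ {ω | x ≤ Y ω}).toReal :=
      lt_of_lt_of_le hTx (ENNReal.toReal_mono (measure_ne_top μ _) (measure_mono hsub))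
    have hsub2 : {ω | x ≤ Y ω} ⊆ {ω | x - 1 < Y ω} := fun ω h =>
      lt_of_lt_of_le (by linarith : x - 1 < x) h
    have hm2 : (μ {ω | x ≤ Y ω}).toReal ≤ (μ {ω | x - 1 < Y ω}).toReal :=
      ENNReal.toReal_mono (measure_ne_top μ _) (measure_mono hsub2)
    have heq : Real.log ((μ {ω | x - 1 < Y ω}).toReal) / (x - 1) * ((x - 1) / x) =
        Real.log ((μ {ω | x - 1 < Y ω}).toReal) / x := by
      field_simp
    rw [heq]
    exact (div_le_div_iff_of_pos_right hx0).2 (Real.log_le_log hposle hm2)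

set_option maxHeartbeats 1000000 in
/-- **double exponential / Kou model.** If `X` has mgf `M` with
`log M(s) = σ²s²/2 + μ₀ s + λ(pη₁/(η₁-s) + qη₂/(η₂+s) - 1)` on `(-η₂, η₁)`, infinite
for `s ≥ η₁` and `s ≤ -η₂`, then `log P(X > x) ~ -η₁ x` and `log P(X ≤ -x) ~ -η₂ x`
as `x → ∞`. -/
theorem doubleExponential_tails
    {Ω : Type*} [MeasurableSpace Ω] (μ : Measure Ω) [IsProbabilityMeasure μ]
    (X : Ω → ℝ) (hX : Measurable X)
    (σ μ₀ lam η₁ η₂ p q : ℝ)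
    (hσ : 0 ≤ σ) (hlam : 0 < lam) (hη₁ : 0 < η₁) (hη₂ : 0 < η₂)
    (hp : 0 < p) (hq : 0 < q) (hpq : p + q = 1)
    (hmgf : ∀ s ∈ Set.Ioo (-η₂) η₁,
      Integrable (fun ω => Real.exp (s * X ω)) μ ∧
      Real.log (∫ ω, Real.exp (s * X ω) ∂μ) =
        σ ^ 2 * s ^ 2 / 2 + μ₀ * s +
          lam * (p * η₁ / (η₁ - s) + q * η₂ / (η₂ + s) - 1))
    (hinf : ∀ s : ℝ, η₁ ≤ s ∨ s ≤ -η₂ →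
      ¬ Integrable (fun ω => Real.exp (s * X ω)) μ) :
    Tendsto (fun x => Real.log ((μ {ω | x < X ω}).toReal) / (-(η₁ * x)))
      atTop (nhds 1) ∧
    Tendsto (fun x => Real.log ((μ {ω | X ω ≤ -x}).toReal) / (-(η₂ * x)))
      atTop (nhds 1) := by
  have hq1 : q ≤ 1 := by linarith
  have hp1 : p ≤ 1 := by linarith
  constructor
  · -- right tail
    have hint₁ : ∀ s ∈ Set.Ico (0:ℝ) η₁, Integrable (fun ω => Real.exp (s * X ω)) μ := by
      intro s hs
      exact (hmgf s ⟨by linarith [hs.1], hs.2⟩).1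
    have hbd₁ : ∀ s ∈ Set.Ico (0:ℝ) η₁,
        |Real.log (∫ ω, Real.exp (s * X ω) ∂μ) - (lam * (p * η₁)) / (η₁ - s)| ≤
          σ ^ 2 * η₁ ^ 2 / 2 + |μ₀| * η₁ + lam := by
      intro s hs
      rw [(hmgf s ⟨by linarith [hs.1], hs.2⟩).2]
      have heq : σ ^ 2 * s ^ 2 / 2 + μ₀ * s +
          lam * (p * η₁ / (η₁ - s) + q * η₂ / (η₂ + s) - 1) - (lam * (p * η₁)) / (η₁ - s) =
          σ ^ 2 * s ^ 2 / 2 + μ₀ * s + lam * (q * η₂ / (η₂ + s) - 1) := by ring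
      rw [heq]
      have hd0 : 0 < η₂ + s := by linarith [hs.1]
      have hub : q * η₂ / (η₂ + s) ≤ 1 := by
        rw [div_le_one hd0]
        have := mul_le_of_le_one_left hη₂.le hq1
        linarith [hs.1]
      have hlb : 0 ≤ q * η₂ / (η₂ + s) := by positivity
      have hs2 : s ^ 2 ≤ η₁ ^ 2 := pow_le_pow_left₀ hs.1 hs.2.le 2
      have hσs := mul_le_mul_of_nonneg_left hs2 (show (0:ℝ) ≤ σ ^ 2 / 2 by positivity)
      have h00 : 0 ≤ σ ^ 2 * s ^ 2 / 2 := by positivity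
      have habs : |μ₀ * s| ≤ |μ₀| * η₁ := by
        rw [abs_mul]
        exact mul_le_mul_of_nonneg_left
          (by rw [abs_of_nonneg hs.1]; exact hs.2.le) (abs_nonneg _)
      have hQ0 := mul_nonneg hlam.le hlb
      have hQ1 := mul_le_mul_of_nonneg_left hub hlam.le
      rw [abs_le]
      constructor
      · linarith [h00, (abs_le.1 habs).1, hQ0]
      · linarith [hσs, (abs_le.1 habs).2, hQ1]
    obtain ⟨-, htd1⟩ := tail_asymp μ X hX η₁ (lam * (p * η₁))
      (σ ^ 2 * η₁ ^ 2 / 2 + |μ₀| * η₁ + lam) hη₁ (by positivity) (by positivity) hint₁ hbd₁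
    have h2 := htd1.mul_const (-(1 / η₁))
    rw [show -η₁ * -(1 / η₁) = 1 by field_simp] at h2
    apply h2.congr'
    filter_upwards [eventually_gt_atTop 0] with x hx
    have hne : -(η₁ * x) ≠ 0 := neg_ne_zero.2 (ne_of_gt (mul_pos hη₁ hx))
    rw [div_mul_eq_mul_div, div_eq_div_iff (ne_of_gt hx) hne]
    field_simp
  · -- left tail, apply to Y = -X
    have hneg : ∀ s : ℝ, (fun ω => Real.exp (s * (-X ω))) = fun ω => Real.exp (-s * X ω) := by
      intro s; funext ω; congr 1; ring
    have hint₂ : ∀ s ∈ Set.Ico (0:ℝ) η₂, Integrable (fun ω => Real.exp (s * (-X ω))) μ := by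
      intro s hs
      rw [hneg s]
      exact (hmgf (-s) ⟨by linarith [hs.2], by linarith [hs.1]⟩).1
    have hbd₂ : ∀ s ∈ Set.Ico (0:ℝ) η₂,
        |Real.log (∫ ω, Real.exp (s * (-X ω)) ∂μ) - (lam * (q * η₂)) / (η₂ - s)| ≤
          σ ^ 2 * η₂ ^ 2 / 2 + |μ₀| * η₂ + lam := by
      intro s hs
      rw [hneg s, (hmgf (-s) ⟨by linarith [hs.2], by linarith [hs.1]⟩).2]
      have heq : σ ^ 2 * (-s) ^ 2 / 2 + μ₀ * (-s) +
          lam * (p * η₁ / (η₁ - (-s)) + q * η₂ / (η₂ + (-s)) - 1) -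
          (lam * (q * η₂)) / (η₂ - s) =
          σ ^ 2 * s ^ 2 / 2 + (-μ₀) * s + lam * (p * η₁ / (η₁ + s) - 1) := by ring
      rw [heq]
      have hd0 : 0 < η₁ + s := by linarith [hs.1]
      have hub : p * η₁ / (η₁ + s) ≤ 1 := by
        rw [div_le_one hd0]
        have := mul_le_of_le_one_left hη₁.le hp1
        linarith [hs.1]
      have hlb : 0 ≤ p * η₁ / (η₁ + s) := by positivity
      have hs2 : s ^ 2 ≤ η₂ ^ 2 := pow_le_pow_left₀ hs.1 hs.2.le 2
      have hσs := mul_le_mul_of_nonneg_left hs2 (show (0:ℝ) ≤ σ ^ 2 / 2 by positivity)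
      have h00 : 0 ≤ σ ^ 2 * s ^ 2 / 2 := by positivity
      have habs : |(-μ₀) * s| ≤ |μ₀| * η₂ := by
        rw [abs_mul, abs_neg]
        exact mul_le_mul_of_nonneg_left
          (by rw [abs_of_nonneg hs.1]; exact hs.2.le) (abs_nonneg _)
      have hQ0 := mul_nonneg hlam.le hlb
      have hQ1 := mul_le_mul_of_nonneg_left hub hlam.le
      rw [abs_le]
      constructor
      · linarith [h00, (abs_le.1 habs).1, hQ0]
      · linarith [hσs, (abs_le.1 habs).2, hQ1]
    have htd2 := tail_asymp_le μ (fun ω => -X ω) hX.neg η₂ (lam * (q * η₂))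
      (σ ^ 2 * η₂ ^ 2 / 2 + |μ₀| * η₂ + lam) hη₂ (by positivity) (by positivity) hint₂ hbd₂
    have hsets : ∀ x : ℝ, {ω | x ≤ -X ω} = {ω | X ω ≤ -x} := by
      intro x; ext ω; simp only [Set.mem_setOf_eq, le_neg]
    have htd2' : Tendsto (fun x => Real.log ((μ {ω | X ω ≤ -x}).toReal) / x) atTop
        (nhds (-η₂)) := htd2.congr (fun x => by rw [hsets x])
    have h2 := htd2'.mul_const (-(1 / η₂))
    rw [show -η₂ * -(1 / η₂) = 1 by field_simp] at h2
    apply h2.congr'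
    filter_upwards [eventually_gt_atTop 0] with x hx
    have hne : -(η₂ * x) ≠ 0 := neg_ne_zero.2 (ne_of_gt (mul_pos hη₂ hx))
    rw [div_mul_eq_mul_div, div_eq_div_iff (ne_of_gt hx) hne]
    field_simp
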